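/- For every fixed Γ > 0, as a → 1⁻ one has P(a,Γ) → 0 and K(a,Γ) → 0; that is, for the perfectly correlated signal the error exponent vanishes for any SNR. -/

import Mathlib

/-- The steady-state prediction error variance `P(a, Γ)`: the unique positive root of
`P² + (1 − a²)(1 − Γ)P − Γ(1 − a²) = 0`, given in closed form. -/
noncomputable def Pss (a Γ : ℝ) : ℝ :=
  ((1 - a ^ 2) * (Γ - 1) +
    Real.sqrt ((1 - a ^ 2) ^ 2 * (1 - Γ) ^ 2 + 4 * Γ * (1 - a ^ 2))) / 2

/-- The steady-state Kalman gain factor `K_p = a·P/(1+P)`. -/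
noncomputable def Kgain (a Γ : ℝ) : ℝ := a * Pss a Γ / (1 + Pss a Γ)

/-- `P̃ = K_p²/(1 − (a − K_p)²)`, the solution of the Lyapunov equation. -/
noncomputable def Ptilde (a Γ : ℝ) : ℝ :=
  (Kgain a Γ) ^ 2 / (1 - (a - Kgain a Γ) ^ 2)

/-- The closed-form error exponent `K(a, Γ) = ½·log(1+P) + ½·(1+P̃)/(1+P) − ½`. -/
noncomputable def Kexp (a Γ : ℝ) : ℝ :=
  (1 / 2) * Real.log (1 + Pss a Γ) + (1 / 2) * (1 + Ptilde a Γ) / (1 + Pss a Γ) - 1 / 2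

lemma Pss_pos {a Γ : ℝ} (hΓ : 0 < Γ) (ha0 : 0 < a) (ha1 : a < 1) : 0 < Pss a Γ := by
  have hb : 0 < 1 - a ^ 2 := by nlinarith
  have hlt : (1 - a ^ 2) ^ 2 * (1 - Γ) ^ 2 < (1 - a ^ 2) ^ 2 * (1 - Γ) ^ 2 + 4 * Γ * (1 - a ^ 2) := by
    nlinarith
  have h1 : Real.sqrt ((1 - a ^ 2) ^ 2 * (1 - Γ) ^ 2)
      < Real.sqrt ((1 - a ^ 2) ^ 2 * (1 - Γ) ^ 2 + 4 * Γ * (1 - a ^ 2)) :=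
    Real.sqrt_lt_sqrt (by positivity) hlt
  have h2 : Real.sqrt ((1 - a ^ 2) ^ 2 * (1 - Γ) ^ 2) = |(1 - a ^ 2) * (1 - Γ)| := by
    rw [show (1 - a ^ 2) ^ 2 * (1 - Γ) ^ 2 = ((1 - a ^ 2) * (1 - Γ)) ^ 2 by ring,
      Real.sqrt_sq_eq_abs]
  have h3 : (1 - a ^ 2) * (1 - Γ) ≤ |(1 - a ^ 2) * (1 - Γ)| := le_abs_self _
  rw [Pss]
  have : -( (1 - a ^ 2) * (Γ - 1)) ≤ |(1 - a ^ 2) * (1 - Γ)| := by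
    rw [show -((1 - a ^ 2) * (Γ - 1)) = (1 - a ^ 2) * (1 - Γ) by ring]; exact h3
  linarith [h2 ▸ h1]

lemma Pss_tendsto (Γ : ℝ) :
    Filter.Tendsto (fun a => Pss a Γ) (nhdsWithin 1 (Set.Iio 1)) (nhds 0) := by
  have hc : Continuous (fun a : ℝ => Pss a Γ) := by
    unfold Pss; fun_prop
  have h0 : Pss 1 Γ = 0 := by simp [Pss]
  have := (hc.tendsto 1).mono_left (nhdsWithin_le_nhds (s := Set.Iio 1))
  rwa [h0] at this

lemma Ptilde_eq {a Γ : ℝ} (hΓ : 0 < Γ) (ha0 : 0 < a) (ha1 : a < 1) :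
    Ptilde a Γ = a ^ 2 * (Pss a Γ) ^ 2 / ((1 + Pss a Γ) ^ 2 - a ^ 2) := by
  have hP := Pss_pos hΓ ha0 ha1
  set p := Pss a Γ with hp
  have h1 : (1 : ℝ) + p ≠ 0 := by positivity
  have hd : 0 < (1 + p) ^ 2 - a ^ 2 := by nlinarith
  rw [Ptilde, Kgain, ← hp]
  rw [show 1 - (a - a * p / (1 + p)) ^ 2 = ((1 + p) ^ 2 - a ^ 2) / (1 + p) ^ 2 by
    field_simp; ring]
  field_simp

lemma Ptilde_tendsto (Γ : ℝ) (hΓ : 0 < Γ) :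
    Filter.Tendsto (fun a => Ptilde a Γ) (nhdsWithin 1 (Set.Iio 1)) (nhds 0) := by
  have hev : ∀ᶠ a : ℝ in nhdsWithin 1 (Set.Iio 1), 0 < a ∧ a < 1 := by
    have hgt : ∀ᶠ a : ℝ in nhds 1, 0 < a := eventually_gt_nhds (by norm_num)
    filter_upwards [eventually_nhdsWithin_of_eventually_nhds hgt,
      self_mem_nhdsWithin] with a h1 h2
    exact ⟨h1, h2⟩
  have hbound : ∀ᶠ a in nhdsWithin 1 (Set.Iio 1),
      0 ≤ Ptilde a Γ ∧ Ptilde a Γ ≤ Pss a Γ / 2 := by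
    filter_upwards [hev] with a ⟨ha0, ha1⟩
    have hP := Pss_pos hΓ ha0 ha1
    rw [Ptilde_eq hΓ ha0 ha1]
    set p := Pss a Γ
    have hd : 0 < (1 + p) ^ 2 - a ^ 2 := by nlinarith
    constructor
    · positivity
    · have h2p : 2 * p ≤ (1 + p) ^ 2 - a ^ 2 := by nlinarith
      have hnum : a ^ 2 * p ^ 2 ≤ p ^ 2 := by
        have ha2 : a ^ 2 ≤ 1 := by nlinarith
        nlinarith [sq_nonneg p, mul_nonneg (sq_nonneg p) (sub_nonneg.mpr ha2)]
      calc a ^ 2 * p ^ 2 / ((1 + p) ^ 2 - a ^ 2) ≤ p ^ 2 / (2 * p) :=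
            div_le_div₀ (by positivity) hnum (by positivity) h2p
        _ = p / 2 := by field_simp
  refine squeeze_zero' (hbound.mono fun a h => h.1) (hbound.mono fun a h => h.2) ?_
  have := (Pss_tendsto Γ).div_const 2
  simpa using this

theorem errorExponent_tendsto_zero_at_perfect_correlation (Γ : ℝ) (hΓ : 0 < Γ) :
    Filter.Tendsto (fun a => Pss a Γ) (nhdsWithin 1 (Set.Iio 1)) (nhds 0) ∧
    Filter.Tendsto (fun a => Kexp a Γ) (nhdsWithin 1 (Set.Iio 1)) (nhds 0) := by
  have hP := Pss_tendsto Γ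
  have hPt := Ptilde_tendsto Γ hΓ
  refine ⟨hP, ?_⟩
  have h1p : Filter.Tendsto (fun a => 1 + Pss a Γ) (nhdsWithin 1 (Set.Iio 1)) (nhds 1) := by
    simpa using hP.const_add 1
  have hlog : Filter.Tendsto (fun a => Real.log (1 + Pss a Γ)) (nhdsWithin 1 (Set.Iio 1))
      (nhds 0) := by
    have := (Real.continuousAt_log one_ne_zero).tendsto.comp h1p
    rw [Real.log_one] at this
    exact this
  have hnum : Filter.Tendsto (fun a => (1 / 2 : ℝ) * (1 + Ptilde a Γ))
      (nhdsWithin 1 (Set.Iio 1)) (nhds (1 / 2)) := by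
    have := (hPt.const_add 1).const_mul (1 / 2 : ℝ)
    simpa using this
  have hdiv := hnum.div h1p one_ne_zero
  have := ((hlog.const_mul (1 / 2 : ℝ)).add hdiv).sub_const (1 / 2)
  have h : Filter.Tendsto (fun a => Kexp a Γ) (nhdsWithin 1 (Set.Iio 1))
      (nhds ((1 / 2) * 0 + 1 / 2 / 1 - 1 / 2)) := by
    simpa [Kexp, mul_div_assoc] using this
  simpa using h
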